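/- Support-shrinking argument in group algebras: let S = C[Λ] be the group algebra of an abelian group Λ over a field C with the twisted diagonal action g • (c x^λ) = (g•c)⟨λ,g⟩ x^λ of a group G, and let s ∈ S with 0 ∈ Supp(s) and coefficient s_0 = 1. If for every g ∈ G the element s − g • s has support strictly contained in Supp(s) only when it is zero (i.e., every t in the ideal generated by s with Supp(t) ⊊ Supp(s) is zero), then s ∈ S^G. -/

import Mathlib

/-- Support-shrinking argument: if `s ∈ C[Λ]` has `s₀ = 1` and every element of
the `G`-stable ideal generated by `s` whose support is strictly contained in
`Supp s` vanishes, then `s` is `G`-invariant. -/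
theorem support_shrinking_invariance
    (G C Λ : Type*) [Group G] [Field C] [MulSemiringAction G C]
    [AddCommGroup Λ]
    (pairing : Λ → G → Cˣ)
    (hp_add : ∀ l m : Λ, ∀ g : G, pairing (l + m) g = pairing l g * pairing m g)
    (hp_mul : ∀ l : Λ, ∀ g h : G, pairing l (g * h) = pairing l g * pairing l h)
    (act : G → RingAut (AddMonoidAlgebra C Λ))
    (hact : ∀ (g : G) (s : AddMonoidAlgebra C Λ) (l : Λ),
      (act g s).coeff l = g • (s.coeff l) * (pairing l g : C))
    (s : AddMonoidAlgebra C Λ) (hs0 : s.coeff 0 = 1)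
    (hmin : ∀ t ∈ Ideal.span {u : AddMonoidAlgebra C Λ | ∃ g : G, u = act g s},
      t.coeff.support ⊂ s.coeff.support → t = 0) :
    ∀ g : G, act g s = s := by
  intro g
  have hp1 : ∀ l : Λ, pairing l 1 = 1 := fun l => by
    have h := hp_mul l 1 1
    rw [mul_one] at h
    exact left_eq_mul.mp h
  have hp0 : ∀ g' : G, pairing (0 : Λ) g' = 1 := fun g' => by
    have h := hp_add 0 0 g'
    rw [add_zero] at h
    exact left_eq_mul.mp h
  have hsz : ∀ (g' : G) (c : C), g' • c = 0 ↔ c = 0 := fun g' c => by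
    constructor
    · intro h
      have := congrArg (fun x => g'⁻¹ • x) h
      simpa [smul_smul] using this
    · rintro rfl; exact smul_zero _
  -- s itself is in the spanning set (take g = 1)
  have hsmem : s ∈ Ideal.span {u : AddMonoidAlgebra C Λ | ∃ g : G, u = act g s} := by
    refine Ideal.subset_span ⟨1, ?_⟩
    ext l
    rw [hact, hp1, Units.val_one, mul_one, one_smul]
  have hgmem : act g s ∈ Ideal.span {u : AddMonoidAlgebra C Λ | ∃ g : G, u = act g s} :=
    Ideal.subset_span ⟨g, rfl⟩
  set t : AddMonoidAlgebra C Λ := s - act g s with ht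
  have htmem : t ∈ Ideal.span {u : AddMonoidAlgebra C Λ | ∃ g : G, u = act g s} :=
    Ideal.sub_mem _ hsmem hgmem
  have hcoeff : ∀ l : Λ, t.coeff l = s.coeff l - g • (s.coeff l) * (pairing l g : C) := fun l => by
    rw [ht, AddMonoidAlgebra.coeff_sub, Finsupp.sub_apply, hact]
  have ht0 : t.coeff 0 = 0 := by
    rw [hcoeff, hs0, hp0, Units.val_one, mul_one, smul_one, sub_self]
  have hsub : t.coeff.support ⊆ s.coeff.support := by
    intro l hl
    rw [Finsupp.mem_support_iff] at hl ⊢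
    intro h0
    apply hl
    rw [hcoeff, h0, smul_zero, zero_mul, sub_zero]
  have hne : t.coeff.support ≠ s.coeff.support := by
    intro h
    have h0s : (0 : Λ) ∈ s.coeff.support := Finsupp.mem_support_iff.mpr (by rw [hs0]; exact one_ne_zero)
    rw [← h, Finsupp.mem_support_iff] at h0s
    exact h0s ht0
  have : t = 0 := hmin t htmem ⟨hsub, fun h => hne (le_antisymm hsub h)⟩
  have := sub_eq_zero.mp this
  exact this.symm
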